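/- For all real parameters λ > 0 with λ ≠ 1 and φ > 1, and every real t, the characteristic function of the SMPtW distribution satisfies ∫₀^∞ exp(i·t·y) · ((log λ) φ y^(φ−1) exp((log λ)·exp(−y^φ) − y^φ))/(λ − 1) dy = Σ_{r=0}^∞ ((i·t)^r / r!) · ((log λ)/(λ − 1)) · Γ(r/φ + 1) · Σ_{j=0}^∞ (log λ)^j / (j! · (j + 1)^(r/φ + 1)), where the integrand and series are complex-valued and i is the imaginary unit. -/

import Mathlib

open Real MeasureTheory Complex

/-- The SMPtW probability density function with parameters `lam > 0`, `lam ≠ 1`, `phi > 0`. -/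
noncomputable def smptwPDF (lam phi y : ℝ) : ℝ :=
  (Real.log lam * phi * y ^ (phi - 1) *
    Real.exp (Real.log lam * Real.exp (-(y ^ phi)) - y ^ phi)) / (lam - 1)

open Set Filter

/-- Gamma-type integral over `Ioi 0`. -/
lemma smptw_int_rpow_exp_aux {a b : ℝ} (ha : 0 ≤ a) (hb : 0 < b) :
    ∫ u in Ioi (0:ℝ), u ^ a * Real.exp (-(b*u)) = Real.Gamma (a+1) / b^(a+1) := by
  have h := Real.integral_rpow_mul_exp_neg_mul_Ioi (show (0:ℝ) < a+1 by linarith) hb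
  simp only [add_sub_cancel_right] at h
  rw [h, one_div, Real.inv_rpow hb.le, inv_mul_eq_div, div_eq_div_iff
    (Real.rpow_pos_of_pos hb _).ne' (Real.rpow_pos_of_pos hb _).ne']

/-- Log-convexity bound on the Gamma function. -/
lemma smptw_gamma_le_rpow_factorial {phi : ℝ} (hphi : 1 < phi) (r : ℕ) :
    Real.Gamma ((r:ℝ)/phi + 1) ≤ ((r.factorial : ℝ)) ^ (1/phi) := by
  have hphi0 : (0:ℝ) < phi := by linarith
  have hθ0 : 0 ≤ 1/phi := by positivity
  have hθ1 : 0 ≤ 1 - 1/phi := by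
    have : 1/phi ≤ 1 := by rw [div_le_one hphi0]; linarith
    linarith
  have hx : ((r:ℝ)+1) ∈ Ioi (0:ℝ) := by simp [mem_Ioi]; positivity
  have hy : (1:ℝ) ∈ Ioi (0:ℝ) := by norm_num
  have hcvx := Real.convexOn_log_Gamma.2 hx hy hθ0 hθ1 (by ring)
  have heq : (1/phi) • ((r:ℝ)+1) + (1 - 1/phi) • (1:ℝ) = (r:ℝ)/phi + 1 := by
    simp only [smul_eq_mul]
    field_simp
    ring
  rw [heq] at hcvx
  simp only [Function.comp_apply, smul_eq_mul] at hcvx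
  have hΓr : Real.Gamma ((r:ℝ)+1) = (r.factorial : ℝ) := by
    exact_mod_cast Real.Gamma_nat_eq_factorial r
  rw [hΓr, Real.Gamma_one, Real.log_one, mul_zero, add_zero] at hcvx
  have hpos : 0 < Real.Gamma ((r:ℝ)/phi + 1) :=
    Real.Gamma_pos_of_pos (by positivity)
  have hfac : (0:ℝ) < (r.factorial : ℝ) := by exact_mod_cast r.factorial_pos
  calc Real.Gamma ((r:ℝ)/phi + 1)
      = Real.exp (Real.log (Real.Gamma ((r:ℝ)/phi + 1))) := (Real.exp_log hpos).symm
    _ ≤ Real.exp (1/phi * Real.log (r.factorial : ℝ)) := Real.exp_le_exp.mpr hcvx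
    _ = ((r.factorial : ℝ)) ^ (1/phi) := by
        rw [Real.rpow_def_of_pos hfac, mul_comm]

/-- Key summability: `|t|^r Γ(r/φ+1)/r!` is summable when `φ > 1`. -/
lemma smptw_summable_abs_t_gamma {phi : ℝ} (hphi : 1 < phi) (t : ℝ) :
    Summable (fun r : ℕ => |t| ^ r * Real.Gamma ((r:ℝ)/phi + 1) / r.factorial) := by
  have hG : ∀ r : ℕ, Real.Gamma ((r:ℝ)/phi + 1) ≤ ((r.factorial : ℝ)) ^ (1/phi) :=
    smptw_gamma_le_rpow_factorial hphi
  have hphi0 : (0:ℝ) < phi := by linarith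
  set θ : ℝ := 1/phi with hθ
  have hθpos : 0 < θ := by positivity
  have h1θ : 0 < 1 - θ := by
    have : θ < 1 := by rw [hθ, div_lt_one hphi0]; linarith
    linarith
  set f : ℕ → ℝ := fun r => |t| ^ r * ((r.factorial:ℝ)) ^ θ / r.factorial with hf
  have hfnonneg : ∀ r, 0 ≤ f r := by
    intro r; rw [hf]; positivity
  have hfsum : Summable f := by
    apply summable_of_ratio_norm_eventually_le (r := 1/2) (by norm_num)
    have htend : Tendsto (fun n : ℕ => ((n:ℝ)+1) ^ (1-θ)) atTop atTop := by
      apply (tendsto_rpow_atTop h1θ).comp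
      exact tendsto_atTop_add_const_right atTop 1 tendsto_natCast_atTop_atTop
    filter_upwards [htend.eventually_ge_atTop (2 * |t|)] with n hn
    have hn1 : (0:ℝ) < (n:ℝ)+1 := by positivity
    have hfacpos : (0:ℝ) < (n.factorial : ℝ) := by exact_mod_cast n.factorial_pos
    have hstep : f (n+1) = f n * (|t| * ((n:ℝ)+1) ^ (θ-1)) := by
      rw [hf]; simp only
      rw [Nat.factorial_succ, pow_succ]
      push_cast
      rw [Real.mul_rpow (by positivity) (by positivity)]
      rw [Real.rpow_sub hn1, Real.rpow_one]
      field_simp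
    have hratio : |t| * ((n:ℝ)+1) ^ (θ-1) ≤ 1/2 := by
      have hrw : ((n:ℝ)+1) ^ (θ-1) = (((n:ℝ)+1) ^ (1-θ))⁻¹ := by
        rw [← Real.rpow_neg hn1.le]; ring_nf
      rw [hrw]
      rw [mul_inv_le_iff₀ (by positivity)]
      calc |t| ≤ (2*|t|) * (1/2) := le_of_eq (by ring)
        _ ≤ ((n:ℝ)+1) ^ (1-θ) * (1/2) := by
            apply mul_le_mul_of_nonneg_right hn (by norm_num)
        _ = 1/2 * ((n:ℝ)+1) ^ (1-θ) := by ring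
    rw [Real.norm_of_nonneg (hfnonneg _), Real.norm_of_nonneg (hfnonneg _), hstep]
    calc f n * (|t| * ((n:ℝ)+1) ^ (θ-1)) ≤ f n * (1/2) :=
          mul_le_mul_of_nonneg_left hratio (hfnonneg n)
      _ = 1/2 * f n := by ring
  apply hfsum.of_nonneg_of_le
  · intro r
    have := Real.Gamma_pos_of_pos (show (0:ℝ) < (r:ℝ)/phi + 1 by positivity)
    positivity
  · intro r
    have hfacpos : (0:ℝ) < (r.factorial : ℝ) := by exact_mod_cast r.factorial_pos
    rw [hf]; simp only
    gcongr
    exact hG r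

/-- The `r`-th moment of the SMPtW distribution. -/
lemma smptw_moment (lam phi : ℝ) (hlam : 0 < lam) (hlam1 : lam ≠ 1) (hphi : 1 < phi) (r : ℕ) :
    ∫ y in Ioi (0:ℝ), (y:ℝ) ^ r * smptwPDF lam phi y
      = (Real.log lam / (lam - 1)) * Real.Gamma ((r:ℝ)/phi + 1) *
          ∑' j : ℕ, (Real.log lam) ^ j /
            ((j.factorial : ℝ) * ((j:ℝ)+1) ^ ((r:ℝ)/phi+1)) := by
  have hphi0 : (0:ℝ) < phi := by linarith
  have hlam1' : lam - 1 ≠ 0 := sub_ne_zero.mpr hlam1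
  have hcpos0 : 0 < Real.log lam / (lam - 1) := by
    rcases lt_or_gt_of_ne hlam1 with h | h
    · exact div_pos_of_neg_of_neg (Real.log_neg hlam h) (by linarith)
    · exact div_pos (Real.log_pos h) (by linarith)
  set L : ℝ := Real.log lam with hL
  set c : ℝ := L / (lam - 1) with hc
  set a : ℝ := (r:ℝ)/phi with ha
  have ha0 : 0 ≤ a := by positivity
  set G : ℝ → ℝ := fun u => c * (u ^ a * Real.exp (L * Real.exp (-u) - u)) with hG
  set H : ℕ → ℝ → ℝ := fun j u =>
    c * (L^j / (j.factorial : ℝ)) * (u ^ a * Real.exp (-(((j:ℝ)+1) * u))) with hH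
  -- Step 1: substitution u = y ^ phi
  have step1 : ∫ y in Ioi (0:ℝ), (y:ℝ) ^ r * smptwPDF lam phi y = ∫ u in Ioi (0:ℝ), G u := by
    rw [← integral_comp_rpow_Ioi G hphi0.ne']
    refine setIntegral_congr_fun measurableSet_Ioi (fun x hx => ?_)
    have hx0 : (0:ℝ) < x := hx
    have hxr : ((x:ℝ) ^ phi) ^ a = (x:ℝ) ^ (r:ℕ) := by
      rw [← Real.rpow_natCast x r, ← Real.rpow_mul hx0.le]
      congr 1
      rw [ha]; field_simp
    simp only [hG, smul_eq_mul, hxr, smptwPDF, abs_of_pos hphi0, hc]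
    field_simp
    rw [show rexp (-x ^ phi) * L - x ^ phi = L * rexp (-x ^ phi) - x ^ phi by ring]
  -- Step 3: pointwise series expansion of G
  have step3 : ∀ u : ℝ, G u = ∑' j : ℕ, H j u := by
    intro u
    have hexp : Real.exp (L * Real.exp (-u)) =
        ∑' j : ℕ, (L * Real.exp (-u))^j / (j.factorial : ℝ) := by
      rw [Real.exp_eq_exp_ℝ, NormedSpace.exp_eq_tsum_div]
    have : G u = ∑' j : ℕ, c * (u ^ a * ((L * Real.exp (-u))^j / (j.factorial : ℝ)
        * Real.exp (-u))) := by
      rw [hG]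
      simp only
      rw [sub_eq_add_neg, Real.exp_add, hexp, ← tsum_mul_right, ← tsum_mul_left,
        ← tsum_mul_left]
    rw [this]
    refine tsum_congr (fun j => ?_)
    rw [hH]
    simp only
    rw [mul_pow, ← Real.exp_nat_mul,
      show Real.exp (-(((j:ℝ)+1) * u)) = Real.exp ((j:ℝ) * (-u)) * Real.exp (-u) by
        rw [← Real.exp_add]; ring_nf]
    ring
  -- integrability of each H j
  have hint : ∀ j : ℕ, IntegrableOn (H j) (Ioi 0) := by
    intro j
    apply Integrable.const_mul
    have h := integrableOn_rpow_mul_exp_neg_mul_rpow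
      (show (-1:ℝ) < a by linarith) (show (0:ℝ) < 1 by norm_num) (show (0:ℝ) < (j:ℝ)+1 by positivity)
    refine h.congr_fun (fun x _ => ?_) measurableSet_Ioi
    simp only [Real.rpow_one, neg_mul]
  have hj1pos : ∀ j : ℕ, (0:ℝ) < (j:ℝ)+1 := fun j => by positivity
  have hval : ∀ j : ℕ, ∫ u in Ioi (0:ℝ), H j u
      = c * (L^j / (j.factorial : ℝ)) * (Real.Gamma (a+1) / ((j:ℝ)+1)^(a+1)) := by
    intro j
    rw [hH]
    simp only
    rw [integral_const_mul, smptw_int_rpow_exp_aux ha0 (hj1pos j)]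
  have hnorm : ∀ j : ℕ, ∫ u in Ioi (0:ℝ), ‖H j u‖
      = |c * (L^j / (j.factorial : ℝ))| * (Real.Gamma (a+1) / ((j:ℝ)+1)^(a+1)) := by
    intro j
    have heq : ∀ u ∈ Ioi (0:ℝ), ‖H j u‖
        = |c * (L^j / (j.factorial : ℝ))| * (u ^ a * Real.exp (-(((j:ℝ)+1) * u))) := by
      intro u hu
      have hu0 : (0:ℝ) < u := hu
      rw [hH]
      simp only [Real.norm_eq_abs, abs_mul]
      rw [_root_.abs_of_nonneg (Real.rpow_nonneg hu0.le a),
        _root_.abs_of_nonneg (Real.exp_pos _).le]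
    rw [setIntegral_congr_fun measurableSet_Ioi heq, integral_const_mul,
      smptw_int_rpow_exp_aux ha0 (hj1pos j)]
  have hΓpos : (0:ℝ) < Real.Gamma (a+1) := Real.Gamma_pos_of_pos (by linarith)
  have hsum : Summable (fun j : ℕ => ∫ u in Ioi (0:ℝ), ‖H j u‖) := by
    apply Summable.of_nonneg_of_le
      (fun j => integral_nonneg (fun u => norm_nonneg _))
      (fun j => ?_)
      (((Real.summable_pow_div_factorial |L|).mul_left (c * Real.Gamma (a+1))))
    rw [hnorm j]
    have h1 : ((j:ℝ)+1)^(a+1) ≥ 1 :=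
      Real.one_le_rpow (by linarith [(Nat.cast_nonneg j : (0:ℝ) ≤ j)]) (by linarith)
    have hfac : (0:ℝ) < (j.factorial : ℝ) := by exact_mod_cast j.factorial_pos
    have habs : |c * (L^j / (j.factorial:ℝ))| = c * (|L|^j / (j.factorial:ℝ)) := by
      rw [abs_mul, _root_.abs_of_pos hcpos0, abs_div, _root_.abs_pow, Nat.abs_cast]
    calc |c * (L^j / (j.factorial:ℝ))| * (Real.Gamma (a+1) / ((j:ℝ)+1)^(a+1))
        ≤ |c * (L^j / (j.factorial:ℝ))| * (Real.Gamma (a+1) / 1) := by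
          gcongr
        _ = c * Real.Gamma (a+1) * (|L|^j / (j.factorial:ℝ)) := by
          rw [habs, div_one]
          ring
  have step6 : ∫ u in Ioi (0:ℝ), G u = ∑' j : ℕ, ∫ u in Ioi (0:ℝ), H j u := by
    rw [setIntegral_congr_fun measurableSet_Ioi (fun u _ => step3 u)]
    exact (integral_tsum_of_summable_integral_norm hint hsum).symm
  rw [step1, step6]
  rw [show (Real.log lam / (lam-1)) * Real.Gamma ((r:ℝ)/phi + 1) *
        (∑' j : ℕ, (Real.log lam) ^ j / ((j.factorial : ℝ) * ((j:ℝ)+1) ^ ((r:ℝ)/phi+1)))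
      = ∑' j : ℕ, (c * Real.Gamma (a+1)) *
          (L ^ j / ((j.factorial : ℝ) * ((j:ℝ)+1) ^ (a+1))) from (tsum_mul_left).symm]
  refine tsum_congr (fun j => ?_)
  rw [hval j]
  have hfac : ((j.factorial : ℝ)) ≠ 0 := by positivity
  have hpow : (((j:ℝ)+1) ^ (a+1)) ≠ 0 := (Real.rpow_pos_of_pos (hj1pos j) _).ne'
  field_simp

/-- the characteristic function of the SMPtW distribution. -/
theorem smptw_characteristic_function (lam phi : ℝ)
    (hlam : 0 < lam) (hlam1 : lam ≠ 1) (hphi : 1 < phi) (t : ℝ) :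
    ∫ y in Set.Ioi (0 : ℝ),
        Complex.exp (Complex.I * t * y) * (smptwPDF lam phi y : ℂ) =
      ∑' r : ℕ,
        ((Complex.I * t) ^ r / (r.factorial : ℂ)) *
          (((Real.log lam / (lam - 1)) * Real.Gamma ((r : ℝ) / phi + 1) *
            ∑' j : ℕ, (Real.log lam) ^ j /
              ((j.factorial : ℝ) * ((j : ℝ) + 1) ^ ((r : ℝ) / phi + 1)) : ℝ) : ℂ) := by
  have hphi0 : (0:ℝ) < phi := by linarith
  have hlam1' : lam - 1 ≠ 0 := sub_ne_zero.mpr hlam1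
  have hcpos0 : 0 < Real.log lam / (lam - 1) := by
    rcases lt_or_gt_of_ne hlam1 with h | h
    · exact div_pos_of_neg_of_neg (Real.log_neg hlam h) (by linarith)
    · exact div_pos (Real.log_pos h) (by linarith)
  set L : ℝ := Real.log lam with hL
  set c : ℝ := L / (lam - 1) with hc
  have hpdf : ∀ y : ℝ, smptwPDF lam phi y
      = c * (phi * y ^ (phi-1) * Real.exp (L * Real.exp (-(y ^ phi)) - y ^ phi)) := by
    intro y
    rw [smptwPDF, hc]
    ring
  have hpdf_nonneg : ∀ y ∈ Ioi (0:ℝ), 0 ≤ smptwPDF lam phi y := by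
    intro y hy
    have hy0 : (0:ℝ) < y := hy
    rw [hpdf]
    positivity
  have hmeas : ∀ r : ℕ, AEStronglyMeasurable (fun y : ℝ => y ^ r * smptwPDF lam phi y)
      (volume.restrict (Ioi 0)) := by
    intro r
    apply Measurable.aestronglyMeasurable
    unfold smptwPDF
    fun_prop
  -- integrability of moment integrands
  have hInt : ∀ r : ℕ, IntegrableOn (fun y : ℝ => y ^ r * smptwPDF lam phi y) (Ioi 0) := by
    intro r
    have hbound : IntegrableOn
        (fun y : ℝ => (c * phi * Real.exp |L|) * (y ^ ((r:ℝ) + phi - 1) * Real.exp (-(y ^ phi))))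
        (Ioi 0) := by
      have h := integrableOn_rpow_mul_exp_neg_rpow
        (show (-1:ℝ) < (r:ℝ) + phi - 1 by
          have : (0:ℝ) ≤ (r:ℝ) := Nat.cast_nonneg r
          linarith)
        hphi0
      exact h.const_mul _
    apply hbound.integrable.mono (hmeas r)
    filter_upwards [ae_restrict_mem measurableSet_Ioi] with y hy
    have hy0 : (0:ℝ) < y := hy
    have hle : y ^ r * smptwPDF lam phi y
        ≤ (c * phi * Real.exp |L|) * (y ^ ((r:ℝ) + phi - 1) * Real.exp (-(y ^ phi))) := by
      rw [hpdf]
      have hyr : (y:ℝ) ^ (r:ℕ) * y ^ (phi-1) = y ^ ((r:ℝ) + phi - 1) := by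
        rw [← Real.rpow_natCast y r, ← Real.rpow_add hy0]
        ring_nf
      have hexp : Real.exp (L * Real.exp (-(y ^ phi)) - y ^ phi)
          ≤ Real.exp |L| * Real.exp (-(y ^ phi)) := by
        rw [sub_eq_add_neg, Real.exp_add]
        apply mul_le_mul_of_nonneg_right ?_ (Real.exp_pos _).le
        apply Real.exp_le_exp.mpr
        calc L * Real.exp (-(y ^ phi)) ≤ |L| * Real.exp (-(y ^ phi)) :=
              mul_le_mul_of_nonneg_right (le_abs_self L) (Real.exp_pos _).le
          _ ≤ |L| * 1 := mul_le_mul_of_nonneg_left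
              (Real.exp_le_one_iff.mpr (neg_nonpos.mpr (Real.rpow_nonneg hy0.le _)))
              (abs_nonneg L)
          _ = |L| := mul_one _
      calc y ^ r * (c * (phi * y ^ (phi-1) * Real.exp (L * Real.exp (-(y ^ phi)) - y ^ phi)))
          = (c * phi) * ((y ^ r * y ^ (phi-1)) * Real.exp (L * Real.exp (-(y ^ phi)) - y ^ phi)) := by
            ring
        _ ≤ (c * phi) * ((y ^ r * y ^ (phi-1)) * (Real.exp |L| * Real.exp (-(y ^ phi)))) := by
            have h0 : (0:ℝ) ≤ y ^ r * y ^ (phi-1) := by positivity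
            have h1 : (0:ℝ) ≤ c * phi := by positivity
            exact mul_le_mul_of_nonneg_left
              (mul_le_mul_of_nonneg_left hexp h0) h1
        _ = (c * phi * Real.exp |L|) * ((y ^ r * y ^ (phi-1)) * Real.exp (-(y ^ phi))) := by
            ring
        _ = (c * phi * Real.exp |L|) * (y ^ ((r:ℝ) + phi - 1) * Real.exp (-(y ^ phi))) := by
            rw [hyr]
    have hnn : 0 ≤ y ^ r * smptwPDF lam phi y := by
      have := hpdf_nonneg y hy
      positivity
    rw [Real.norm_of_nonneg hnn, Real.norm_of_nonneg (by positivity)]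
    exact hle
  -- moments
  set M : ℕ → ℝ := fun r => ∫ y in Ioi (0:ℝ), y ^ r * smptwPDF lam phi y with hM
  have hMval : ∀ r : ℕ, M r = c * Real.Gamma ((r:ℝ)/phi + 1) *
      ∑' j : ℕ, L ^ j / ((j.factorial : ℝ) * ((j:ℝ)+1) ^ ((r:ℝ)/phi+1)) :=
    fun r => smptw_moment lam phi hlam hlam1 hphi r
  have hMnonneg : ∀ r : ℕ, 0 ≤ M r := by
    intro r
    apply setIntegral_nonneg measurableSet_Ioi
    intro y hy
    have hy0 : (0:ℝ) < y := hy
    have := hpdf_nonneg y hy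
    positivity
  -- bound M r
  set K : ℝ := ∑' j : ℕ, |L| ^ j / (j.factorial : ℝ) with hK
  have hKsum : Summable (fun j : ℕ => |L| ^ j / (j.factorial : ℝ)) :=
    Real.summable_pow_div_factorial |L|
  have hMle : ∀ r : ℕ, M r ≤ (c * K) * Real.Gamma ((r:ℝ)/phi + 1) := by
    intro r
    rw [hMval r]
    have hΓpos : (0:ℝ) < Real.Gamma ((r:ℝ)/phi + 1) :=
      Real.Gamma_pos_of_pos (by positivity)
    have hterm : ∀ j : ℕ, L ^ j / ((j.factorial : ℝ) * ((j:ℝ)+1) ^ ((r:ℝ)/phi+1))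
        ≤ |L| ^ j / (j.factorial : ℝ) := by
      intro j
      have hfac : (0:ℝ) < (j.factorial : ℝ) := by exact_mod_cast j.factorial_pos
      have hpow1 : (1:ℝ) ≤ ((j:ℝ)+1) ^ ((r:ℝ)/phi+1) :=
        Real.one_le_rpow (by linarith [(Nat.cast_nonneg j : (0:ℝ) ≤ j)]) (by positivity)
      calc L ^ j / ((j.factorial : ℝ) * ((j:ℝ)+1) ^ ((r:ℝ)/phi+1))
          ≤ |L ^ j / ((j.factorial : ℝ) * ((j:ℝ)+1) ^ ((r:ℝ)/phi+1))| := le_abs_self _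
        _ = |L| ^ j / ((j.factorial : ℝ) * ((j:ℝ)+1) ^ ((r:ℝ)/phi+1)) := by
            rw [abs_div, _root_.abs_pow, _root_.abs_of_nonneg (by positivity :
              (0:ℝ) ≤ (j.factorial : ℝ) * ((j:ℝ)+1) ^ ((r:ℝ)/phi+1))]
        _ ≤ |L| ^ j / ((j.factorial : ℝ) * 1) := by
            gcongr
        _ = |L| ^ j / (j.factorial : ℝ) := by rw [mul_one]
    have hsumL : Summable (fun j : ℕ => L ^ j /
        ((j.factorial : ℝ) * ((j:ℝ)+1) ^ ((r:ℝ)/phi+1))) := by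
      apply Summable.of_abs
      apply hKsum.of_nonneg_of_le (fun j => abs_nonneg _)
      intro j
      have hfac : (0:ℝ) < (j.factorial : ℝ) := by exact_mod_cast j.factorial_pos
      have hpow1 : (1:ℝ) ≤ ((j:ℝ)+1) ^ ((r:ℝ)/phi+1) :=
        Real.one_le_rpow (by linarith [(Nat.cast_nonneg j : (0:ℝ) ≤ j)]) (by positivity)
      rw [abs_div, _root_.abs_pow, _root_.abs_of_nonneg (by positivity :
        (0:ℝ) ≤ (j.factorial : ℝ) * ((j:ℝ)+1) ^ ((r:ℝ)/phi+1))]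
      calc |L| ^ j / ((j.factorial : ℝ) * ((j:ℝ)+1) ^ ((r:ℝ)/phi+1))
          ≤ |L| ^ j / ((j.factorial : ℝ) * 1) := by gcongr
        _ = |L| ^ j / (j.factorial : ℝ) := by rw [mul_one]
    have hSle : (∑' j : ℕ, L ^ j / ((j.factorial : ℝ) * ((j:ℝ)+1) ^ ((r:ℝ)/phi+1))) ≤ K :=
      Summable.tsum_le_tsum hterm hsumL hKsum
    calc c * Real.Gamma ((r:ℝ)/phi + 1) *
          (∑' j : ℕ, L ^ j / ((j.factorial : ℝ) * ((j:ℝ)+1) ^ ((r:ℝ)/phi+1)))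
        ≤ c * Real.Gamma ((r:ℝ)/phi + 1) * K := by
          apply mul_le_mul_of_nonneg_left hSle (by positivity)
      _ = (c * K) * Real.Gamma ((r:ℝ)/phi + 1) := by ring
  -- the complex summands
  set g : ℕ → ℝ → ℂ := fun r y =>
    ((Complex.I * t) ^ r / (r.factorial : ℂ)) * ((y ^ r * smptwPDF lam phi y : ℝ) : ℂ) with hg
  have hnormc : ∀ r : ℕ, ‖(Complex.I * t) ^ r / (r.factorial : ℂ)‖
      = |t| ^ r / (r.factorial : ℝ) := by
    intro r
    rw [norm_div, norm_pow, norm_mul, Complex.norm_I, one_mul, Complex.norm_real,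
      Real.norm_eq_abs]
    norm_num
  -- integrand equality
  have hintegrand : ∀ y : ℝ, Complex.exp (Complex.I * t * y) * (smptwPDF lam phi y : ℂ)
      = ∑' r : ℕ, g r y := by
    intro y
    have hexp : Complex.exp (Complex.I * t * y)
        = ∑' r : ℕ, (Complex.I * t * y) ^ r / (r.factorial : ℂ) := by
      rw [Complex.exp_eq_exp_ℂ, NormedSpace.exp_eq_tsum_div]
    rw [hexp, ← tsum_mul_right]
    refine tsum_congr (fun r => ?_)
    rw [hg]
    simp only
    push_cast
    ring
  -- integrability of each g r
  have hgInt : ∀ r : ℕ, Integrable (g r) (volume.restrict (Ioi 0)) := by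
    intro r
    exact ((hInt r).ofReal (𝕜 := ℂ)).const_mul _
  -- norm integrals of g r
  have hgnorm : ∀ r : ℕ, ∫ y in Ioi (0:ℝ), ‖g r y‖
      = (|t| ^ r / (r.factorial : ℝ)) * M r := by
    intro r
    have heq : ∀ y ∈ Ioi (0:ℝ), ‖g r y‖
        = (|t| ^ r / (r.factorial : ℝ)) * (y ^ r * smptwPDF lam phi y) := by
      intro y hy
      have hy0 : (0:ℝ) < y := hy
      rw [hg]
      simp only
      rw [norm_mul, hnormc r, Complex.norm_real, Real.norm_of_nonneg]
      have := hpdf_nonneg y hy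
      positivity
    rw [setIntegral_congr_fun measurableSet_Ioi heq, integral_const_mul]
  -- summability of norm integrals
  have hgsum : Summable (fun r : ℕ => ∫ y in Ioi (0:ℝ), ‖g r y‖) := by
    apply Summable.of_nonneg_of_le
      (fun r => integral_nonneg (fun y => norm_nonneg _))
      (fun r => ?_)
      (((smptw_summable_abs_t_gamma hphi t).mul_left (c * K)))
    rw [hgnorm r]
    have hfac : (0:ℝ) < (r.factorial : ℝ) := by exact_mod_cast r.factorial_pos
    calc (|t| ^ r / (r.factorial : ℝ)) * M r
        ≤ (|t| ^ r / (r.factorial : ℝ)) * ((c * K) * Real.Gamma ((r:ℝ)/phi + 1)) := by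
          apply mul_le_mul_of_nonneg_left (hMle r) (by positivity)
      _ = (c * K) * (|t| ^ r * Real.Gamma ((r:ℝ)/phi + 1) / (r.factorial : ℝ)) := by
          ring
  -- put it together
  calc ∫ y in Ioi (0:ℝ), Complex.exp (Complex.I * t * y) * (smptwPDF lam phi y : ℂ)
      = ∫ y in Ioi (0:ℝ), ∑' r : ℕ, g r y :=
        setIntegral_congr_fun measurableSet_Ioi (fun y _ => hintegrand y)
    _ = ∑' r : ℕ, ∫ y in Ioi (0:ℝ), g r y :=
        (integral_tsum_of_summable_integral_norm hgInt hgsum).symm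
    _ = ∑' r : ℕ,
        ((Complex.I * t) ^ r / (r.factorial : ℂ)) *
          (((Real.log lam / (lam - 1)) * Real.Gamma ((r : ℝ) / phi + 1) *
            ∑' j : ℕ, (Real.log lam) ^ j /
              ((j.factorial : ℝ) * ((j : ℝ) + 1) ^ ((r : ℝ) / phi + 1)) : ℝ) : ℂ) := by
        refine tsum_congr (fun r => ?_)
        rw [hg]
        simp only
        rw [integral_const_mul,
          show (∫ a in Ioi (0:ℝ), ((a ^ r * smptwPDF lam phi a : ℝ) : ℂ))
            = ((M r : ℝ) : ℂ) from integral_ofReal]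
        congr 1
        exact_mod_cast congrArg Complex.ofReal (hMval r)
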